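/- Let x₁, …, x_m ∈ ℝᴺ be unit vectors and let H ⊆ ℝᴺ be their span. For α > 0 and γ ∈ (0,1), define LCD_{α,γ}(H) := inf over unit vectors y ∈ H of LCD_{α,γ}(y), and define the multidimensional LCD of (x₁,…,x_m) as the infimum of ‖Θ‖₂ over Θ ∈ ℝ^m such that dist((⟨Θ,y₁⟩,…,⟨Θ,y_N⟩), ℤᴺ) < min(γ‖(⟨Θ,y₁⟩,…,⟨Θ,y_N⟩)‖₂, α), where y_j ∈ ℝ^m is the j-th 'column' vector (x_{1j},…,x_{mj}). Then √m · LCD_{α,γ}(x₁,…,x_m) ≥ LCD_{α,γ}(H). -/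

import Mathlib

open Pointwise


/-- Euclidean distance from `v` to the integer lattice `ℤᴺ`. -/
noncomputable def latticeDist (N : ℕ) (v : Fin N → ℝ) : ℝ :=
  sInf {d | ∃ p : Fin N → ℤ, d = Real.sqrt (∑ i, (v i - (p i : ℝ)) ^ 2)}

/-- The essential least common denominator of a vector. -/
noncomputable def eLCD (N : ℕ) (α γ : ℝ) (x : Fin N → ℝ) : ℝ :=
  sInf {θ : ℝ | 0 < θ ∧
    latticeDist N (θ • x) < min (γ * Real.sqrt (∑ i, (θ * x i) ^ 2)) α}

lemma latticeDist_nonneg (N : ℕ) (v : Fin N → ℝ) : 0 ≤ latticeDist N v := by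
  apply Real.sInf_nonneg
  rintro d ⟨p, rfl⟩
  positivity

lemma eLCD_nonneg (N : ℕ) (α γ : ℝ) (x : Fin N → ℝ) : 0 ≤ eLCD N α γ x :=
  Real.sInf_nonneg fun θ hθ => le_of_lt hθ.1

lemma sqrt_sum_smul (N : ℕ) (c : ℝ) (v : Fin N → ℝ) :
    Real.sqrt (∑ j, (c * v j) ^ 2) = |c| * Real.sqrt (∑ j, v j ^ 2) := by
  have : (∑ j, (c * v j) ^ 2) = c ^ 2 * ∑ j, v j ^ 2 := by
    rw [Finset.mul_sum]; congr 1; ext j; ring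
  rw [this, Real.sqrt_mul (sq_nonneg c), Real.sqrt_sq_eq_abs]

open EuclideanSpace in
lemma sqrt_sum_eq_norm (N : ℕ) (v : Fin N → ℝ) :
    Real.sqrt (∑ j, v j ^ 2) = ‖(EuclideanSpace.equiv (Fin N) ℝ).symm v‖ := by
  rw [EuclideanSpace.norm_eq]
  congr 1
  refine Finset.sum_congr rfl fun j _ => ?_
  rw [Real.norm_eq_abs, sq_abs]
  rfl

/-- For unit vectors `x₁,…,x_m` spanning `H`,
`√m · LCD_{α,γ}(x₁,…,x_m) ≥ LCD_{α,γ}(H)`, where `LCD_{α,γ}(H)` is the infimum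
of the LCD over unit vectors of `H`, and the multidimensional LCD is the infimum
of `‖Θ‖₂` over `Θ` with `dist((⟨Θ,y_j⟩)_j, ℤᴺ) < min(γ‖(⟨Θ,y_j⟩)_j‖₂, α)`. -/
theorem stmt13 (N m : ℕ) (α γ : ℝ) (hα : 0 < α) (hγ : γ ∈ Set.Ioo (0:ℝ) 1)
    (x : Fin m → Fin N → ℝ) (hx : ∀ i, Real.sqrt (∑ j, x i j ^ 2) = 1)
    (H : Submodule ℝ (Fin N → ℝ)) (hH : H = Submodule.span ℝ (Set.range x)) :
    sInf {r | ∃ y ∈ H, Real.sqrt (∑ j, y j ^ 2) = 1 ∧ r = eLCD N α γ y} ≤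
      Real.sqrt m *
        sInf {r | ∃ Θ : Fin m → ℝ, r = Real.sqrt (∑ i, Θ i ^ 2) ∧
          latticeDist N (fun j => ∑ i, Θ i * x i j) <
            min (γ * Real.sqrt (∑ j, (∑ i, Θ i * x i j) ^ 2)) α} := by
  set S : Set ℝ := {r | ∃ y ∈ H, Real.sqrt (∑ j, y j ^ 2) = 1 ∧ r = eLCD N α γ y} with hS
  set T : Set ℝ := {r | ∃ Θ : Fin m → ℝ, r = Real.sqrt (∑ i, Θ i ^ 2) ∧
          latticeDist N (fun j => ∑ i, Θ i * x i j) <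
            min (γ * Real.sqrt (∑ j, (∑ i, Θ i * x i j) ^ 2)) α} with hT
  have hS0 : ∀ r ∈ S, (0:ℝ) ≤ r := by
    rintro r ⟨y, hy, hy1, rfl⟩
    exact eLCD_nonneg N α γ y
  have hSbdd : BddBelow S := ⟨0, hS0⟩
  -- Key claim
  have key : ∀ r ∈ T, sInf S ≤ Real.sqrt m * r := by
    rintro r ⟨Θ, rfl, hΘ⟩
    set v : Fin N → ℝ := fun j => ∑ i, Θ i * x i j with hv
    set t : ℝ := Real.sqrt (∑ j, v j ^ 2) with htdef
    have ht0 : 0 < t := by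
      by_contra h
      push_neg at h
      have h1 : latticeDist N v < γ * t := lt_of_lt_of_le hΘ (min_le_left _ _)
      have := latticeDist_nonneg N v
      nlinarith [hγ.1]
    set y₀ : Fin N → ℝ := fun j => t⁻¹ * v j with hy₀
    have hty : (t • y₀) = v := by
      funext j
      simp only [Pi.smul_apply, smul_eq_mul, hy₀]
      field_simp
    have hy₀unit : Real.sqrt (∑ j, y₀ j ^ 2) = 1 := by
      rw [hy₀, sqrt_sum_smul, abs_of_pos (inv_pos.mpr ht0), ← htdef,
        inv_mul_cancel₀ ht0.ne']
    have hy₀H : y₀ ∈ H := by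
      rw [hH]
      have hvmem : v ∈ Submodule.span ℝ (Set.range x) := by
        have : v = ∑ i, Θ i • x i := by
          funext j
          simp [hv, Finset.sum_apply]
        rw [this]
        exact Submodule.sum_mem _ fun i _ =>
          Submodule.smul_mem _ _ (Submodule.subset_span (Set.mem_range_self i))
      have hy₀v : y₀ = t⁻¹ • v := by funext j; simp [hy₀]
      rw [hy₀v]
      exact Submodule.smul_mem _ _ hvmem
    have heLCD : eLCD N α γ y₀ ≤ t := by
      apply csInf_le ⟨0, fun θ hθ => le_of_lt hθ.1⟩
      refine ⟨ht0, ?_⟩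
      rw [hty]
      have : Real.sqrt (∑ j, (t * y₀ j) ^ 2) = t := by
        rw [sqrt_sum_smul, hy₀unit, abs_of_pos ht0, mul_one]
      rw [this]
      exact hΘ
    have hmem : eLCD N α γ y₀ ∈ S := ⟨y₀, hy₀H, hy₀unit, rfl⟩
    have h1 : sInf S ≤ t := le_trans (csInf_le hSbdd hmem) heLCD
    refine le_trans h1 ?_
    -- t ≤ √m * ‖Θ‖
    have hnorm : t ≤ ∑ i, |Θ i| := by
      rw [htdef, sqrt_sum_eq_norm]
      have hv2 : (EuclideanSpace.equiv (Fin N) ℝ).symm v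
          = ∑ i, Θ i • (EuclideanSpace.equiv (Fin N) ℝ).symm (x i) := by
        apply (EuclideanSpace.equiv (Fin N) ℝ).injective
        simp only [map_sum, map_smul, ContinuousLinearEquiv.apply_symm_apply]
        funext j
        simp [hv, Finset.sum_apply]
      rw [hv2]
      refine le_trans (norm_sum_le _ _) ?_
      refine Finset.sum_le_sum fun i _ => ?_
      rw [norm_smul, Real.norm_eq_abs, ← sqrt_sum_eq_norm, hx i, mul_one]
    have hcs : (∑ i, |Θ i|) ≤ Real.sqrt m * Real.sqrt (∑ i, Θ i ^ 2) := by
      rw [← Real.sqrt_mul (Nat.cast_nonneg m)]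
      have h2 : (∑ i, |Θ i|) ^ 2 ≤ (m : ℝ) * ∑ i, Θ i ^ 2 := by
        have := sq_sum_le_card_mul_sum_sq (s := Finset.univ) (f := fun i => |Θ i|)
        simpa [sq_abs] using this
      calc (∑ i, |Θ i|) = Real.sqrt ((∑ i, |Θ i|) ^ 2) := by
            rw [Real.sqrt_sq (by positivity)]
        _ ≤ Real.sqrt ((m : ℝ) * ∑ i, Θ i ^ 2) := Real.sqrt_le_sqrt h2
    exact le_trans hnorm hcs
  by_cases hTne : T.Nonempty
  · have h1 : Real.sqrt m * sInf T = sInf (Real.sqrt m • T) :=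
      (Real.sInf_smul_of_nonneg (Real.sqrt_nonneg m) T).symm
    rw [h1]
    apply le_csInf (hTne.smul_set)
    rintro b ⟨r, hr, rfl⟩
    exact key r hr
  · rw [Set.not_nonempty_iff_eq_empty] at hTne
    rw [hTne, Real.sInf_empty, mul_zero]
    by_cases hSne : S.Nonempty
    · obtain ⟨r, hr⟩ := hSne
      obtain ⟨y, hy, hy1, rfl⟩ := hr
      have hempty : {θ : ℝ | 0 < θ ∧
          latticeDist N (θ • y) < min (γ * Real.sqrt (∑ j, (θ * y j) ^ 2)) α} = ∅ := by
        rw [Set.eq_empty_iff_forall_notMem]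
        rintro θ ⟨hθ0, hθ⟩
        rw [hH, Submodule.mem_span_range_iff_exists_fun] at hy
        obtain ⟨c, hc⟩ := hy
        have hyj : ∀ j, y j = ∑ i, c i * x i j := by
          intro j
          rw [← hc]
          simp [Finset.sum_apply]
        have : Real.sqrt (∑ i, (θ * c i) ^ 2) ∈ T := by
          refine ⟨fun i => θ * c i, rfl, ?_⟩
          have h1 : (fun j => ∑ i, θ * c i * x i j) = θ • y := by
            funext j
            rw [Pi.smul_apply, smul_eq_mul, hyj j, Finset.mul_sum]
            congr 1; ext i; ring
          rw [h1]
          have h2 : ∀ j, (∑ i, θ * c i * x i j) = θ * y j := by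
            intro j
            rw [hyj j, Finset.mul_sum]
            congr 1; ext i; ring
          simp only [h2]
          exact hθ
        rw [hTne] at this
        exact this
      have : eLCD N α γ y = 0 := by
        rw [eLCD, hempty, Real.sInf_empty]
      rw [← this]
      exact csInf_le hSbdd ⟨y, hy, hy1, rfl⟩
    · rw [Set.not_nonempty_iff_eq_empty] at hSne
      rw [hSne, Real.sInf_empty]
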